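/- Let α, β, γ, τ be real numbers with α, β, γ > 0. Both eigenvalues of the 2×2 matrix T = [[αβ, α], [τγαβ, τγα + |1-τ|]] have modulus strictly less than 1 if and only if α(β+γ) < 1 and 0 < τ < 2(1-αβ)/(1-αβ+αγ). -/

import Mathlib

private lemma quad_jury (t d : ℝ) (ht : 0 < t) (hd : 0 ≤ d) :
    (∀ lam : ℂ, lam ^ 2 - (t : ℂ) * lam + (d : ℂ) = 0 → ‖lam‖ < 1) ↔
      (d < 1 ∧ t < 1 + d) := by
  constructor
  · intro h
    rcases lt_or_ge (t ^ 2) (4 * d) with hdisc | hdisc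
    · -- complex roots
      obtain ⟨y, hypos, hy2⟩ : ∃ y : ℝ, 0 < y ∧ y ^ 2 = 4 * d - t ^ 2 :=
        ⟨Real.sqrt (4 * d - t ^ 2), Real.sqrt_pos.mpr (by linarith),
          Real.sq_sqrt (by linarith)⟩
      have hroot : (⟨t / 2, y / 2⟩ : ℂ) ^ 2 - (t : ℂ) * ⟨t / 2, y / 2⟩ + (d : ℂ) = 0 := by
        rw [Complex.ext_iff]
        constructor <;> simp [pow_two, Complex.mul_re, Complex.mul_im] <;> ring_nf
        nlinarith
      have habs := h _ hroot
      have hsq : ‖(⟨t / 2, y / 2⟩ : ℂ)‖ ^ 2 = (t / 2) ^ 2 + (y / 2) ^ 2 := by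
        rw [Complex.sq_norm, Complex.normSq_apply]; simp [pow_two]
      have h1 : (t / 2) ^ 2 + (y / 2) ^ 2 < 1 := by
        rw [← hsq]; nlinarith [norm_nonneg (⟨t / 2, y / 2⟩ : ℂ)]
      constructor <;> nlinarith
    · -- real roots
      obtain ⟨s, hsnn, hs2⟩ : ∃ s : ℝ, 0 ≤ s ∧ s ^ 2 = t ^ 2 - 4 * d :=
        ⟨Real.sqrt (t ^ 2 - 4 * d), Real.sqrt_nonneg _, Real.sq_sqrt (by linarith)⟩
      have e1 : ((t + s) / 2) ^ 2 - t * ((t + s) / 2) + d = 0 := by nlinarith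
      have e2 : ((t - s) / 2) ^ 2 - t * ((t - s) / 2) + d = 0 := by nlinarith
      have h1 := h (((t + s) / 2 : ℝ) : ℂ) (by exact_mod_cast congrArg (Complex.ofReal) e1)
      have h2 := h (((t - s) / 2 : ℝ) : ℂ) (by exact_mod_cast congrArg (Complex.ofReal) e2)
      rw [Complex.norm_real, Real.norm_eq_abs, abs_lt] at h1 h2
      constructor <;> nlinarith [h1.1, h1.2, h2.1, h2.2]
  · rintro ⟨hd1, htd⟩ lam hroot
    obtain ⟨x, y⟩ := lam
    rw [Complex.ext_iff] at hroot
    obtain ⟨hre, him⟩ := hroot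
    simp [pow_two, Complex.mul_re, Complex.mul_im] at hre him
    have habs : ‖(⟨x, y⟩ : ℂ)‖ ^ 2 = x ^ 2 + y ^ 2 := by
      rw [Complex.sq_norm, Complex.normSq_apply]; ring
    have hgoal : x ^ 2 + y ^ 2 < 1 := by
      rcases eq_or_ne y 0 with hy | hy
      · subst hy
        simp only [mul_zero, zero_mul, sub_zero, add_zero] at hre
        have hx0 : 0 ≤ x := by nlinarith
        have hx1 : x < 1 := by nlinarith [(x - 1) * ((t - x) - 1)]
        nlinarith
      · have him' : y * (2 * x - t) = 0 := by linarith [him]; 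
        rcases mul_eq_zero.mp him' with h' | h'
        · exact absurd h' hy
        · nlinarith
    nlinarith [norm_nonneg (⟨x, y⟩ : ℂ)]

private lemma jury_equiv (α β γ τ : ℝ) (hα : 0 < α) (hβ : 0 < β) (hγ : 0 < γ) (hτ : 0 < τ) :
    (α * β * |1 - τ| < 1 ∧ α * β + τ * γ * α + |1 - τ| < 1 + α * β * |1 - τ|) ↔
      (α * (β + γ) < 1 ∧ τ < 2 * (1 - α * β) / (1 - α * β + α * γ)) := by
  have hαβ : 0 < α * β := by positivity
  have hαγ : 0 < α * γ := by positivity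
  constructor
  · rintro ⟨h1, h2⟩
    -- t < 1 + d  ⇔  τγα < (1-αβ)(1-|1-τ|)
    have key : τ * γ * α < (1 - α * β) * (1 - |1 - τ|) := by nlinarith
    have hu : |1 - τ| < 1 ∧ α * β < 1 := by
      by_contra hcon
      push_neg at hcon
      rcases le_or_gt 1 (|1 - τ|) with hu1 | hu1
      · have hab : 1 ≤ α * β := by
          by_contra hab
          push_neg at hab
          nlinarith [abs_nonneg (1 - τ)]
        nlinarith [abs_nonneg (1 - τ)]
      · have := hcon hu1
        nlinarith
    obtain ⟨hu1, hab⟩ := hu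
    rcases abs_cases (1 - τ) with ⟨he, _⟩ | ⟨he, hneg⟩
    · -- τ ≤ 1
      rw [he] at key hu1
      have hτ1 : τ ≤ 1 := by linarith
      have hbg : α * (β + γ) < 1 := by nlinarith
      refine ⟨hbg, ?_⟩
      rw [lt_div_iff₀ (by nlinarith)]
      nlinarith
    · -- τ > 1
      rw [he] at key hu1
      have hτ1 : 1 < τ := by nlinarith
      have hbg : α * (β + γ) < 1 := by nlinarith
      refine ⟨hbg, ?_⟩
      rw [lt_div_iff₀ (by nlinarith)]
      nlinarith
  · rintro ⟨hbg, hτ2⟩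
    have hden : 0 < 1 - α * β + α * γ := by nlinarith
    rw [lt_div_iff₀ hden] at hτ2
    have hab : α * β < 1 := by nlinarith
    have hτlt2 : τ < 2 := by nlinarith
    have hulo : |1 - τ| < 1 := by rw [abs_lt]; constructor <;> nlinarith
    constructor
    · nlinarith [abs_nonneg (1 - τ)]
    · rcases abs_cases (1 - τ) with ⟨he, _⟩ | ⟨he, hneg⟩ <;> rw [he] <;> nlinarith

theorem eigenvalues_T_modulus_lt_one_iff (α β γ τ : ℝ)
    (hα : 0 < α) (hβ : 0 < β) (hγ : 0 < γ) (hτ : 0 < τ) :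
    (∀ lam : ℂ, lam ∈ spectrum ℂ
        ((!![α * β, α; τ * γ * α * β, τ * γ * α + |1 - τ|]).map (algebraMap ℝ ℂ)) →
      ‖lam‖ < 1) ↔
      (α * (β + γ) < 1 ∧ τ < 2 * (1 - α * β) / (1 - α * β + α * γ)) := by
  set A : Matrix (Fin 2) (Fin 2) ℂ :=
    (!![α * β, α; τ * γ * α * β, τ * γ * α + |1 - τ|]).map (algebraMap ℝ ℂ) with hA
  have hmem : ∀ lam : ℂ, lam ∈ spectrum ℂ A ↔
      lam ^ 2 - ((α * β + τ * γ * α + |1 - τ| : ℝ) : ℂ) * lam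
        + ((α * β * |1 - τ| : ℝ) : ℂ) = 0 := by
    intro lam
    rw [spectrum.mem_iff, Matrix.isUnit_iff_isUnit_det]
    have hM : algebraMap ℂ (Matrix (Fin 2) (Fin 2) ℂ) lam - A =
        !![lam - ((α * β : ℝ) : ℂ), -((α : ℝ) : ℂ);
           -((τ * γ * α * β : ℝ) : ℂ), lam - ((τ * γ * α + |1 - τ| : ℝ) : ℂ)] := by
      ext i j
      fin_cases i <;> fin_cases j <;>
        simp [hA, Matrix.algebraMap_matrix_apply, Matrix.map_apply]
    rw [hM, Matrix.det_fin_two_of]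
    have hdet : (lam - ((α * β : ℝ) : ℂ)) * (lam - ((τ * γ * α + |1 - τ| : ℝ) : ℂ))
        - -((α : ℝ) : ℂ) * -((τ * γ * α * β : ℝ) : ℂ)
        = lam ^ 2 - ((α * β + τ * γ * α + |1 - τ| : ℝ) : ℂ) * lam
          + ((α * β * |1 - τ| : ℝ) : ℂ) := by
      push_cast
      ring
    rw [hdet]
    simp [isUnit_iff_ne_zero]
  have h1 : (∀ lam : ℂ, lam ∈ spectrum ℂ A → ‖lam‖ < 1) ↔
      (∀ lam : ℂ, lam ^ 2 - ((α * β + τ * γ * α + |1 - τ| : ℝ) : ℂ) * lam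
        + ((α * β * |1 - τ| : ℝ) : ℂ) = 0 → ‖lam‖ < 1) :=
    forall_congr' fun lam => imp_congr (hmem lam) Iff.rfl
  have hkey := quad_jury (α * β + τ * γ * α + |1 - τ|) (α * β * |1 - τ|)
    (by positivity) (by positivity)
  exact h1.trans (hkey.trans (jury_equiv α β γ τ hα hβ hγ hτ))
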